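/- Suppose α > 2. Then the product ξ1·ξ2 is integrable with E[ξ1·ξ2] = (θ2/(α − 1))·Σ_{k=0}^∞ (1 + k/θ1)^{1−α}, and the covariance satisfies Cov(ξ1, ξ2) = E[ξ1·ξ2] − E[ξ1]·E[ξ2] = (θ2/(α − 1))·Σ_{k=0}^∞ (k/θ1)·(1 + k/θ1)^{−α}, which is strictly positive. -/

import Mathlib

open MeasureTheory Real Filter Set Topology ENNReal NNReal

lemma aux_int {c θ2 α : ℝ} (hc : 0 < c) (hθ2 : 0 < θ2) (hα : 1 < α) :
    IntegrableOn (fun x : ℝ => (c + x / θ2) ^ (-α)) (Ioi 0) volume ∧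
      ∫ x in Ioi 0, (c + x / θ2) ^ (-α) = θ2 / (α - 1) * c ^ (1 - α) := by
  have hA1 : (0:ℝ) < α - 1 := by linarith
  have hderiv : ∀ x ∈ Ici (0:ℝ),
      HasDerivAt (fun x : ℝ => -(θ2 / (α - 1) * (c + x / θ2) ^ (1 - α)))
        ((c + x / θ2) ^ (-α)) x := by
    intro x hx
    have hx0 : (0:ℝ) ≤ x := hx
    have hpos : 0 < c + x / θ2 := by positivity
    have h1 : HasDerivAt (fun x : ℝ => c + x / θ2) (1 / θ2) x := by
      simpa [one_div] using ((hasDerivAt_id x).div_const θ2).const_add c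
    have h2 : HasDerivAt (fun x : ℝ => (c + x / θ2) ^ (1 - α))
        ((1 - α) * (c + x / θ2) ^ (1 - α - 1) * (1 / θ2)) x :=
      by have := (Real.hasDerivAt_rpow_const (p := 1 - α) (Or.inl hpos.ne')).comp x h1; exact this
    have h3 := (h2.const_mul (θ2 / (α - 1))).neg
    have hkey : -(θ2 / (α - 1) * ((1 - α) * (c + x / θ2) ^ (1 - α - 1) * (1 / θ2)))
        = (c + x / θ2) ^ (-α) := by
      rw [show (1:ℝ) - α - 1 = -α by ring]
      field_simp
      ring
    rw [hkey] at h3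
    exact h3
  have g'nonneg : ∀ x ∈ Ioi (0:ℝ), 0 ≤ (c + x / θ2) ^ (-α) := by
    intro x hx
    have : (0:ℝ) < x := hx
    positivity
  have htends : Tendsto (fun x : ℝ => -(θ2 / (α - 1) * (c + x / θ2) ^ (1 - α)))
      atTop (𝓝 0) := by
    have hInf : Tendsto (fun x : ℝ => c + x / θ2) atTop atTop :=
      tendsto_atTop_add_const_left _ c (Tendsto.atTop_div_const hθ2 tendsto_id)
    have h0 : Tendsto (fun x : ℝ => (c + x / θ2) ^ (1 - α)) atTop (𝓝 0) := by
      have := (tendsto_rpow_neg_atTop hA1).comp hInf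
      simpa [Function.comp_def, show -(α - 1) = 1 - α by ring] using this
    have := (h0.const_mul (θ2 / (α - 1))).neg
    simpa using this
  refine ⟨integrableOn_Ioi_deriv_of_nonneg' hderiv g'nonneg htends, ?_⟩
  rw [integral_Ioi_of_hasDerivAt_of_nonneg' hderiv g'nonneg htends]
  rw [zero_div, add_zero]
  ring

lemma aux_summable {θ1 p : ℝ} (hθ1 : 0 < θ1) (hp : p < -1) :
    Summable (fun k : ℕ => (1 + (k : ℝ) / θ1) ^ p) := by
  set m : ℝ := min 1 θ1⁻¹ with hm
  have hm0 : 0 < m := lt_min one_pos (inv_pos.2 hθ1)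
  have hbase : ∀ k : ℕ, m * ((k : ℝ) + 1) ≤ 1 + (k : ℝ) / θ1 := by
    intro k
    have hk0 : (0:ℝ) ≤ (k : ℝ) := Nat.cast_nonneg k
    have h1 : m ≤ 1 := min_le_left _ _
    have h2 : m ≤ θ1⁻¹ := min_le_right _ _
    have h3 : m * (k : ℝ) ≤ θ1⁻¹ * (k : ℝ) := mul_le_mul_of_nonneg_right h2 hk0
    have h4 : (k : ℝ) / θ1 = θ1⁻¹ * (k : ℝ) := by rw [div_eq_mul_inv]; ring
    nlinarith
  have hsumM : Summable (fun k : ℕ => m ^ p * ((k : ℝ) + 1) ^ p) := by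
    apply Summable.mul_left
    have h := (summable_nat_add_iff (f := fun n : ℕ => (n : ℝ) ^ p) 1).2
      (Real.summable_nat_rpow.2 hp)
    simpa using h
  refine Summable.of_nonneg_of_le (fun k => Real.rpow_nonneg (by positivity) p) ?_ hsumM
  intro k
  have h0 : 0 < m * ((k:ℝ)+1) := by positivity
  calc (1 + (k:ℝ)/θ1) ^ p ≤ (m * ((k:ℝ)+1)) ^ p :=
        Real.rpow_le_rpow_of_nonpos h0 (hbase k) (by linarith)
    _ = m ^ p * ((k:ℝ)+1) ^ p := Real.mul_rpow hm0.le (by positivity)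

theorem stmt_2
    {Ω : Type*} [MeasurableSpace Ω] (P : Measure Ω) [IsProbabilityMeasure P]
    (ξ1 : Ω → ℕ) (ξ2 : Ω → ℝ)
    (hξ1meas : Measurable ξ1) (hξ2meas : Measurable ξ2)
    (hξ1pos : ∀ ω, 1 ≤ ξ1 ω) (hξ2nonneg : ∀ ω, 0 ≤ ξ2 ω)
    (α θ1 θ2 : ℝ) (hα : 0 < α) (hθ1 : 0 < θ1) (hθ2 : 0 < θ2)
    (hsurv : ∀ k : ℕ, 1 ≤ k → ∀ x : ℝ, 0 ≤ x →
      (P {ω | k ≤ ξ1 ω ∧ x ≤ ξ2 ω}).toReal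
        = (1 + ((k : ℝ) - 1) / θ1 + x / θ2) ^ (-α))
    (hα2 : 2 < α) :
    Integrable (fun ω => (ξ1 ω : ℝ) * ξ2 ω) P ∧
      (∫ ω, (ξ1 ω : ℝ) * ξ2 ω ∂P)
        = (θ2 / (α - 1)) * ∑' k : ℕ, (1 + (k : ℝ) / θ1) ^ (1 - α) ∧
      (∫ ω, (ξ1 ω : ℝ) * ξ2 ω ∂P) - (∫ ω, (ξ1 ω : ℝ) ∂P) * (∫ ω, ξ2 ω ∂P)
        = (θ2 / (α - 1)) * ∑' k : ℕ, ((k : ℝ) / θ1) * (1 + (k : ℝ) / θ1) ^ (-α) ∧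
      0 < (θ2 / (α - 1)) * ∑' k : ℕ, ((k : ℝ) / θ1) * (1 + (k : ℝ) / θ1) ^ (-α) := by
  have hα1 : (1:ℝ) < α := by linarith
  have hA1 : (0:ℝ) < α - 1 := by linarith
  have hAmeas : ∀ k : ℕ, MeasurableSet {ω | k + 1 ≤ ξ1 ω} :=
    fun k => hξ1meas measurableSet_Ici
  -- survival function with strict inequality in the second coordinate
  have hsurv' : ∀ (k : ℕ) (t : ℝ), 0 ≤ t →
      P {ω | k + 1 ≤ ξ1 ω ∧ t < ξ2 ω}
        = ENNReal.ofReal ((1 + (k:ℝ)/θ1 + t/θ2) ^ (-α)) := by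
    intro k t ht
    set B : ℕ → Set Ω := fun n => {ω | k + 1 ≤ ξ1 ω ∧ t + 1/((n:ℝ)+1) ≤ ξ2 ω} with hB
    have hmono : Monotone B := by
      intro m n hmn ω hω
      refine ⟨hω.1, le_trans (by gcongr <;> exact_mod_cast hmn) hω.2⟩
    have hunion : ⋃ n, B n = {ω | k + 1 ≤ ξ1 ω ∧ t < ξ2 ω} := by
      ext ω
      simp only [mem_iUnion, hB, mem_setOf_eq]
      constructor
      · rintro ⟨n, h1, h2⟩
        refine ⟨h1, lt_of_lt_of_le ?_ h2⟩
        have : (0:ℝ) < 1/((n:ℝ)+1) := by positivity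
        linarith
      · rintro ⟨h1, h2⟩
        obtain ⟨n, hn⟩ := exists_nat_one_div_lt (sub_pos.2 h2)
        exact ⟨n, h1, by linarith⟩
    have htend := tendsto_measure_iUnion_atTop (μ := P) hmono
    rw [hunion] at htend
    have heq : ∀ n : ℕ, P (B n)
        = ENNReal.ofReal ((1 + (k:ℝ)/θ1 + (t + 1/((n:ℝ)+1))/θ2) ^ (-α)) := by
      intro n
      have h0 : (P (B n)).toReal
          = (1 + ((((k:ℕ)+1:ℕ)) - 1 : ℝ)/θ1 + (t + 1/((n:ℝ)+1))/θ2) ^ (-α) :=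
        hsurv (k+1) (Nat.le_add_left 1 k) (t + 1/((n:ℝ)+1)) (by positivity)
      rw [← ENNReal.ofReal_toReal (measure_ne_top P (B n)), h0]
      congr 2
      push_cast
      try ring
    have htend2 : Tendsto (fun n : ℕ => P (B n)) atTop
        (𝓝 (ENNReal.ofReal ((1 + (k:ℝ)/θ1 + t/θ2) ^ (-α)))) := by
      simp_rw [heq]
      apply ENNReal.tendsto_ofReal
      have hcont : ContinuousAt (fun x : ℝ => (1 + (k:ℝ)/θ1 + x/θ2) ^ (-α)) t := by
        apply ContinuousAt.rpow_const
        · fun_prop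
        · left
          have : (0:ℝ) < 1 + (k:ℝ)/θ1 + t/θ2 := by positivity
          exact this.ne'
      have hx : Tendsto (fun n : ℕ => t + 1/((n:ℝ)+1)) atTop (𝓝 t) := by
        simpa using tendsto_const_nhds.add (tendsto_one_div_add_atTop_nhds_zero_nat (𝕜 := ℝ))
      exact (hcont.tendsto.comp hx)
    exact tendsto_nhds_unique htend htend2
  -- lintegral of ξ2 on {k+1 ≤ ξ1}
  have hL : ∀ k : ℕ, ∫⁻ ω in {ω | k + 1 ≤ ξ1 ω}, ENNReal.ofReal (ξ2 ω) ∂P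
      = ENNReal.ofReal (θ2 / (α - 1) * (1 + (k:ℝ)/θ1) ^ (1 - α)) := by
    intro k
    have hck : (0:ℝ) < 1 + (k:ℝ)/θ1 := by positivity
    obtain ⟨hint, hval⟩ := aux_int hck hθ2 hα1
    rw [lintegral_eq_lintegral_meas_lt (P.restrict _)
      (Eventually.of_forall hξ2nonneg) hξ2meas.aemeasurable]
    have hsets : ∀ t : ℝ, t ∈ Ioi (0:ℝ) →
        (P.restrict {ω | k + 1 ≤ ξ1 ω}) {ω | t < ξ2 ω}
          = ENNReal.ofReal ((1 + (k:ℝ)/θ1 + t/θ2) ^ (-α)) := by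
      intro t ht
      rw [Measure.restrict_apply (show MeasurableSet {ω | t < ξ2 ω} from hξ2meas measurableSet_Ioi)]
      rw [show {ω | t < ξ2 ω} ∩ {ω | k + 1 ≤ ξ1 ω} = {ω | k + 1 ≤ ξ1 ω ∧ t < ξ2 ω} by
        ext ω; simp [mem_setOf_eq, and_comm]]
      exact hsurv' k t (le_of_lt ht)
    rw [setLIntegral_congr_fun measurableSet_Ioi hsets]
    rw [← ofReal_integral_eq_lintegral_ofReal hint
      ((ae_restrict_mem measurableSet_Ioi).mono fun x hx =>
        Real.rpow_nonneg (by have : (0:ℝ) < x := hx; positivity) _)]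
    rw [hval]
  -- decomposition of the natural number as a sum of indicators
  have hnat : ∀ n : ℕ, (n : ℝ≥0∞) = ∑' k : ℕ, if k + 1 ≤ n then (1:ℝ≥0∞) else 0 := by
    intro n
    rw [tsum_eq_sum (s := Finset.range n)
      (fun k hk => by
        simp only [Finset.mem_range, not_lt] at hk
        rw [if_neg (by omega)])]
    rw [Finset.sum_congr rfl
      (fun k hk => if_pos (Nat.succ_le_of_lt (Finset.mem_range.1 hk)))]
    simp
  -- pointwise decomposition of the product
  have hprod : ∀ ω, ENNReal.ofReal ((ξ1 ω : ℝ) * ξ2 ω)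
      = ∑' k : ℕ, Set.indicator {ω' | k + 1 ≤ ξ1 ω'}
          (fun ω' => ENNReal.ofReal (ξ2 ω')) ω := by
    intro ω
    rw [ENNReal.ofReal_mul (by positivity), ENNReal.ofReal_natCast,
      hnat (ξ1 ω), ← ENNReal.tsum_mul_right]
    refine tsum_congr fun k => ?_
    by_cases h : k + 1 ≤ ξ1 ω <;> simp [Set.indicator, h, -Order.add_one_le_iff]
  have hmof : Measurable fun ω => ENNReal.ofReal (ξ2 ω) := hξ2meas.ennreal_ofReal
  have hdecomp : ∫⁻ ω, ENNReal.ofReal ((ξ1 ω : ℝ) * ξ2 ω) ∂P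
      = ∑' k : ℕ, ∫⁻ ω in {ω | k + 1 ≤ ξ1 ω}, ENNReal.ofReal (ξ2 ω) ∂P := by
    simp_rw [hprod]
    rw [lintegral_tsum (fun k => (hmof.indicator (hAmeas k)).aemeasurable)]
    exact tsum_congr fun k => lintegral_indicator (hAmeas k) _
  -- summability
  have hsumA : Summable (fun k : ℕ => (1 + (k:ℝ)/θ1) ^ (1 - α)) :=
    aux_summable hθ1 (by linarith)
  have hsumB : Summable (fun k : ℕ => (1 + (k:ℝ)/θ1) ^ (-α)) :=
    aux_summable hθ1 (by linarith)
  have hAnn : ∀ k : ℕ, (0:ℝ) ≤ (1 + (k:ℝ)/θ1) ^ (1 - α) := fun k => by positivity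
  have hBnn : ∀ k : ℕ, (0:ℝ) ≤ (1 + (k:ℝ)/θ1) ^ (-α) := fun k => by positivity
  have hTnn : (0:ℝ) ≤ θ2 / (α - 1) * ∑' k : ℕ, (1 + (k:ℝ)/θ1) ^ (1 - α) :=
    mul_nonneg (by positivity) (tsum_nonneg hAnn)
  -- the lintegral of the product
  have hlint : ∫⁻ ω, ENNReal.ofReal ((ξ1 ω : ℝ) * ξ2 ω) ∂P
      = ENNReal.ofReal (θ2 / (α - 1) * ∑' k : ℕ, (1 + (k:ℝ)/θ1) ^ (1 - α)) := by
    rw [hdecomp]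
    simp_rw [hL]
    rw [← _root_.tsum_mul_left]
    rw [← ENNReal.ofReal_tsum_of_nonneg (fun k => by positivity) (hsumA.mul_left _)]
  have hmf : Measurable (fun ω => (ξ1 ω : ℝ) * ξ2 ω) :=
    (measurable_from_top.comp hξ1meas).mul hξ2meas
  have hint1 : Integrable (fun ω => (ξ1 ω : ℝ) * ξ2 ω) P := by
    refine ⟨hmf.aestronglyMeasurable, ?_⟩
    rw [hasFiniteIntegral_iff_ofReal (ae_of_all _ fun ω =>
      mul_nonneg (Nat.cast_nonneg _) (hξ2nonneg ω))]
    rw [hlint]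
    exact ENNReal.ofReal_lt_top
  have hEprod : ∫ ω, (ξ1 ω : ℝ) * ξ2 ω ∂P
      = θ2 / (α - 1) * ∑' k : ℕ, (1 + (k:ℝ)/θ1) ^ (1 - α) := by
    rw [integral_eq_lintegral_of_nonneg_ae (ae_of_all _ fun ω =>
      mul_nonneg (Nat.cast_nonneg _) (hξ2nonneg ω)) hmf.aestronglyMeasurable,
      hlint, ENNReal.toReal_ofReal hTnn]
  -- expectation of ξ1
  have hPA : ∀ k : ℕ, P {ω | k + 1 ≤ ξ1 ω}
      = ENNReal.ofReal ((1 + (k:ℝ)/θ1) ^ (-α)) := by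
    intro k
    have hset : {ω | k + 1 ≤ ξ1 ω ∧ (0:ℝ) ≤ ξ2 ω} = {ω | k + 1 ≤ ξ1 ω} := by
      ext ω; simp [hξ2nonneg ω]
    have h0 : (P {ω | k + 1 ≤ ξ1 ω ∧ (0:ℝ) ≤ ξ2 ω}).toReal
        = (1 + ((((k:ℕ)+1:ℕ)) - 1 : ℝ)/θ1 + 0/θ2) ^ (-α) :=
      hsurv (k+1) (Nat.le_add_left 1 k) 0 le_rfl
    rw [hset] at h0
    rw [← ENNReal.ofReal_toReal (measure_ne_top P _), h0]
    congr 2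
    push_cast
    try ring
  have hm1 : Measurable fun ω => ((ξ1 ω : ℕ) : ℝ) := measurable_from_top.comp hξ1meas
  have hE1 : ∫ ω, (ξ1 ω : ℝ) ∂P = ∑' k : ℕ, (1 + (k:ℝ)/θ1) ^ (-α) := by
    rw [integral_eq_lintegral_of_nonneg_ae (ae_of_all _ fun ω =>
      Nat.cast_nonneg _) hm1.aestronglyMeasurable]
    have hlint1 : ∫⁻ ω, ENNReal.ofReal ((ξ1 ω : ℝ)) ∂P
        = ∑' k : ℕ, P {ω | k + 1 ≤ ξ1 ω} := by
      have hpt : ∀ ω, ENNReal.ofReal ((ξ1 ω : ℝ))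
          = ∑' k : ℕ, Set.indicator {ω' | k + 1 ≤ ξ1 ω'} (fun _ => (1:ℝ≥0∞)) ω := by
        intro ω
        rw [ENNReal.ofReal_natCast, hnat (ξ1 ω)]
        refine tsum_congr fun k => ?_
        by_cases h : k + 1 ≤ ξ1 ω <;> simp [Set.indicator, h, -Order.add_one_le_iff]
      simp_rw [hpt]
      rw [lintegral_tsum (fun k => (measurable_const.indicator (hAmeas k)).aemeasurable)]
      refine tsum_congr fun k => ?_
      rw [lintegral_indicator (hAmeas k)]
      simp
    rw [hlint1]
    simp_rw [hPA]
    rw [← ENNReal.ofReal_tsum_of_nonneg hBnn hsumB,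
      ENNReal.toReal_ofReal (tsum_nonneg hBnn)]
  -- expectation of ξ2
  have hE2 : ∫ ω, ξ2 ω ∂P = θ2 / (α - 1) := by
    have huniv : {ω | 0 + 1 ≤ ξ1 ω} = (univ : Set Ω) :=
      eq_univ_of_forall fun ω => by simpa using hξ1pos ω
    have h := hL 0
    rw [huniv, Measure.restrict_univ] at h
    rw [integral_eq_lintegral_of_nonneg_ae (ae_of_all _ hξ2nonneg)
      hξ2meas.aestronglyMeasurable, h]
    rw [show (1 + ((0:ℕ):ℝ)/θ1) = 1 by norm_num, Real.one_rpow, mul_one,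
      ENNReal.toReal_ofReal (by positivity)]
  -- covariance
  have key : ∀ k : ℕ, (1 + (k:ℝ)/θ1) ^ (1-α) - (1 + (k:ℝ)/θ1) ^ (-α)
      = ((k:ℝ)/θ1) * (1 + (k:ℝ)/θ1) ^ (-α) := by
    intro k
    have hc : (0:ℝ) < 1 + (k:ℝ)/θ1 := by positivity
    rw [show (1:ℝ) - α = 1 + (-α) by ring, Real.rpow_add hc, Real.rpow_one]
    ring
  have hsumC : Summable (fun k : ℕ => ((k:ℝ)/θ1) * (1 + (k:ℝ)/θ1) ^ (-α)) :=
    (hsumA.sub hsumB).congr key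
  have hcov : (∫ ω, (ξ1 ω : ℝ) * ξ2 ω ∂P) - (∫ ω, (ξ1 ω : ℝ) ∂P) * (∫ ω, ξ2 ω ∂P)
      = (θ2 / (α - 1)) * ∑' k : ℕ, ((k : ℝ) / θ1) * (1 + (k : ℝ) / θ1) ^ (-α) := by
    rw [hEprod, hE1, hE2]
    rw [show θ2 / (α - 1) * (∑' k : ℕ, (1 + (k:ℝ)/θ1) ^ (1 - α))
        - (∑' k : ℕ, (1 + (k:ℝ)/θ1) ^ (-α)) * (θ2 / (α - 1))
        = θ2 / (α - 1) * ((∑' k : ℕ, (1 + (k:ℝ)/θ1) ^ (1 - α))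
            - ∑' k : ℕ, (1 + (k:ℝ)/θ1) ^ (-α)) by ring]
    rw [← Summable.tsum_sub hsumA hsumB]
    congr 1
    exact tsum_congr key
  have hpos : 0 < (θ2 / (α - 1)) * ∑' k : ℕ, ((k : ℝ) / θ1) * (1 + (k : ℝ) / θ1) ^ (-α) := by
    refine mul_pos (by positivity) ?_
    refine Summable.tsum_pos hsumC (fun k => by positivity) 1 ?_
    have h1 : ((1:ℕ):ℝ) = 1 := Nat.cast_one
    rw [h1]
    positivity
  exact ⟨hint1, hEprod, hcov, hpos⟩
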